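/- arXiv:1106.1691 — 4 statements merged into one kernel-verified Lean document; each statement's English description precedes it below -/
import Mathlib

section
/- Let a_i, b_i define a Jacobi matrix J and let J̃ be the matrix obtained by replacing ã_n = θ²(a_n + M), b̃_{n-1} = θ b_{n-1}, b̃_n = θ b_n for some fixed 0 < n < N-1, θ > 0, M ∈ ℝ, leaving all other entries unchanged. Let P_i, P̃_i be the first-kind polynomials of J and J̃, and φ_i the second-kind polynomials defined by φ_n = 0, φ_{n+1} = 1/b_n, b_{i-1}φ_i = (λ-a_{i-1})φ_{i-1} - b_{i-2}φ_{i-2}. Then for all n+1 ≤ i ≤ N-1: P̃_i(λ) = A(λ) φ_i(λ) P_n(λ) + P_i(λ), where A(λ) = λ(θ^{-2} - 1) - M. -/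
open Matrix BigOperators

/-- First-kind polynomials of the perturbed Jacobi matrix in terms of the first- and
second-kind polynomials of the original one:
`P̃_i = A φ_i P_n + P_i` for `n+1 ≤ i ≤ N-1`, where `A(λ) = λ(θ⁻² - 1) - M`. -/
theorem stmt_11 (N n : ℕ) (hn1 : 1 ≤ n) (hn2 : n + 2 ≤ N)
    (a b a' b' : ℕ → ℝ) (hb : ∀ i, b i ≠ 0)
    (θ M : ℝ) (hθ : 0 < θ)
    (ha' : ∀ i, i ≠ n → a' i = a i) (han : a' n = θ ^ 2 * (a n + M))
    (hb' : ∀ i, i ≠ n → i ≠ n - 1 → b' i = b i)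
    (hbn : b' n = θ * b n) (hbn1 : b' (n - 1) = θ * b (n - 1))
    (P P' φ : ℕ → ℝ → ℝ)
    (hP0 : ∀ lam, P 0 lam = 1)
    (hP1 : ∀ lam, b 0 * P 1 lam = (lam - a 0) * P 0 lam)
    (hPrec : ∀ i lam, b (i + 1) * P (i + 2) lam =
      (lam - a (i + 1)) * P (i + 1) lam - b i * P i lam)
    (hP'0 : ∀ lam, P' 0 lam = 1)
    (hP'1 : ∀ lam, b' 0 * P' 1 lam = (lam - a' 0) * P' 0 lam)
    (hP'rec : ∀ i lam, b' (i + 1) * P' (i + 2) lam =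
      (lam - a' (i + 1)) * P' (i + 1) lam - b' i * P' i lam)
    (hφn : ∀ lam, φ n lam = 0)
    (hφn1 : ∀ lam, φ (n + 1) lam = 1 / b n)
    (hφrec : ∀ i lam, n + 2 ≤ i → i ≤ N - 1 →
      b (i - 1) * φ i lam = (lam - a (i - 1)) * φ (i - 1) lam - b (i - 2) * φ (i - 2) lam) :
    ∀ i lam, n + 1 ≤ i → i ≤ N - 1 →
      P' i lam = (lam * ((θ ^ 2)⁻¹ - 1) - M) * φ i lam * P n lam + P i lam := by
  have hθne : θ ≠ 0 := ne_of_gt hθ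
  obtain ⟨s, rfl⟩ : ∃ s, n = s + 1 := ⟨n - 1, by omega⟩
  rw [Nat.add_sub_cancel] at hbn1
  -- Step 1: P' agrees with P strictly below n
  have hlt : ∀ j, j + 1 ≤ s + 1 → ∀ lam, P' j lam = P j lam := by
    intro j
    induction j using Nat.strong_induction_on with
    | _ j ih =>
      intro hj lam
      match j, hj with
      | 0, _ => rw [hP'0, hP0]
      | 1, hj =>
        have h := hP'1 lam
        rw [hb' 0 (by omega) (by omega), ha' 0 (by omega), hP'0] at h
        have h1 := hP1 lam
        rw [hP0] at h1
        exact mul_left_cancel₀ (hb 0) (h.trans h1.symm)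
      | (j+2), hj =>
        have h := hP'rec j lam
        rw [hb' (j+1) (by omega) (by omega), ha' (j+1) (by omega),
            hb' j (by omega) (by omega), ih (j+1) (by omega) (by omega) lam,
            ih j (by omega) (by omega) lam] at h
        exact mul_left_cancel₀ (hb (j+1)) (h.trans (hPrec j lam).symm)
  -- Step 2: P' n = θ⁻¹ P n
  have hPn : ∀ lam, P' (s + 1) lam = θ⁻¹ * P (s + 1) lam := by
    intro lam
    rcases s with _ | m
    · have h := hP'1 lam
      rw [hbn1, ha' 0 (by omega), hP'0] at h
      have h1 := hP1 lam
      rw [hP0] at h1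
      have key : b 0 * (θ * P' 1 lam) = b 0 * P 1 lam := by
        rw [h1]; linear_combination h
      have h2 := mul_left_cancel₀ (hb 0) key
      rw [inv_mul_eq_div, eq_div_iff hθne]
      linear_combination h2
    · have h := hP'rec m lam
      rw [hbn1, ha' (m+1) (by omega), hb' m (by omega) (by omega),
          hlt (m+1) (by omega) lam, hlt m (by omega) lam] at h
      have key : b (m+1) * (θ * P' (m+2) lam) = b (m+1) * P (m+2) lam := by
        rw [hPrec m lam]; linear_combination h
      have h2 := mul_left_cancel₀ (hb (m+1)) key
      rw [inv_mul_eq_div, eq_div_iff hθne]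
      linear_combination h2
  -- Step 3: main induction above n
  have main : ∀ k lam, s + 2 + k ≤ N - 1 →
      P' (s + 2 + k) lam =
        (lam * ((θ ^ 2)⁻¹ - 1) - M) * φ (s + 2 + k) lam * P (s + 1) lam + P (s + 2 + k) lam := by
    intro k
    induction k using Nat.strong_induction_on with
    | _ k ih =>
      intro lam hk
      match k with
      | 0 =>
        have h : θ * b (s+1) * P' (s+2) lam =
            (lam - θ ^ 2 * (a (s+1) + M)) * (θ⁻¹ * P (s+1) lam) - θ * b s * P s lam := by
          have h0 := hP'rec s lam
          rw [hbn, han, hbn1, hPn lam, hlt s (by omega) lam] at h0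
          exact h0
        have r := hPrec s lam
        have hφ1 : φ (s+2) lam = 1 / b (s+1) := hφn1 lam
        show P' (s+2) lam = (lam * ((θ ^ 2)⁻¹ - 1) - M) * φ (s+2) lam * P (s+1) lam + P (s+2) lam
        rw [hφ1]
        have hbne := hb (s+1)
        field_simp at h ⊢
        linear_combination h - θ ^ 2 * r
      | 1 =>
        have h : b (s+2) * P' (s+3) lam =
            (lam - a (s+2)) * P' (s+2) lam - θ * b (s+1) * P' (s+1) lam := by
          have h0 := hP'rec (s+1) lam
          rw [hb' (s+1+1) (by omega) (by omega), ha' (s+1+1) (by omega), hbn] at h0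
          exact h0
        have ih0 : P' (s+2) lam =
            (lam * ((θ ^ 2)⁻¹ - 1) - M) * φ (s+2) lam * P (s+1) lam + P (s+2) lam :=
          ih 0 (by omega) lam (by omega)
        have hφ1 : φ (s+2) lam = 1 / b (s+1) := hφn1 lam
        have hp : P' (s+1) lam = θ⁻¹ * P (s+1) lam := hPn lam
        rw [ih0, hφ1, hp] at h
        have hφ : b (s+2) * φ (s+3) lam =
            (lam - a (s+2)) * φ (s+2) lam - b (s+1) * φ (s+1) lam :=
          hφrec (s+3) lam (by omega) (by omega)
        rw [hφ1, hφn lam] at hφ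
        have r := hPrec (s+1) lam
        have key : (θ * b (s+1) * b (s+2)) * P' (s+3) lam =
            (θ * b (s+1) * b (s+2)) *
              ((lam * ((θ ^ 2)⁻¹ - 1) - M) * φ (s+3) lam * P (s+1) lam + P (s+3) lam) := by
          have hb1 := hb (s+1)
          have hb2 := hb (s+2)
          field_simp at h hφ ⊢
          apply mul_left_cancel₀ (mul_ne_zero hb1 hb2)
          linear_combination h - (lam * (1 - θ ^ 2) - θ ^ 2 * M) * P (s+1) lam * hφ -
            θ ^ 2 * b (s+1) * r
        exact mul_left_cancel₀ (mul_ne_zero (mul_ne_zero hθne (hb (s+1))) (hb (s+2))) key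
      | (m+2) =>
        have h : b (s+2+m+1) * P' (s+2+m+2) lam =
            (lam - a (s+2+m+1)) * P' (s+2+m+1) lam - b (s+2+m) * P' (s+2+m) lam := by
          have h0 := hP'rec (s+2+m) lam
          rw [hb' (s+2+m+1) (by omega) (by omega), ha' (s+2+m+1) (by omega),
              hb' (s+2+m) (by omega) (by omega)] at h0
          exact h0
        have ih1 : P' (s+2+m+1) lam =
            (lam * ((θ ^ 2)⁻¹ - 1) - M) * φ (s+2+m+1) lam * P (s+1) lam + P (s+2+m+1) lam :=
          ih (m+1) (by omega) lam (by omega)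
        have ih0 : P' (s+2+m) lam =
            (lam * ((θ ^ 2)⁻¹ - 1) - M) * φ (s+2+m) lam * P (s+1) lam + P (s+2+m) lam :=
          ih m (by omega) lam (by omega)
        rw [ih1, ih0] at h
        have hφ : b (s+2+m+1) * φ (s+2+m+2) lam =
            (lam - a (s+2+m+1)) * φ (s+2+m+1) lam - b (s+2+m) * φ (s+2+m) lam :=
          hφrec (s+2+m+2) lam (by omega) (by omega)
        have r : b (s+2+m+1) * P (s+2+m+2) lam =
            (lam - a (s+2+m+1)) * P (s+2+m+1) lam - b (s+2+m) * P (s+2+m) lam :=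
          hPrec (s+2+m) lam
        have key : b (s+2+m+1) * P' (s+2+m+2) lam =
            b (s+2+m+1) *
              ((lam * ((θ ^ 2)⁻¹ - 1) - M) * φ (s+2+m+2) lam * P (s+1) lam + P (s+2+m+2) lam) := by
          linear_combination h - (lam * ((θ ^ 2)⁻¹ - 1) - M) * P (s+1) lam * hφ - r
        exact mul_left_cancel₀ (hb (s+2+m+1)) key
  intro i lam h1 h2
  obtain ⟨k, rfl⟩ : ∃ k, i = s + 2 + k := ⟨i - (s + 2), by omega⟩
  exact main k lam (by omega)
end

section
/- With the setup of the interior perturbation at index 0 < n < N-1 (ã_n = θ²(a_n+M), b̃_{n-1} = θ b_{n-1}, b̃_n = θ b_n), the characteristic-type polynomials satisfy Q̃_N(λ) = Q_N(λ) + A(λ) φ_N(λ) P_n(λ), where A(λ) = λ(θ^{-2}-1) - M, Q_N(λ) = (λ-a_{N-1})P_{N-1}(λ) - b_{N-2}P_{N-2}(λ), and Q̃_N is defined analogously from the P̃_i. -/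
open Matrix BigOperators

/-- The perturbed characteristic-type polynomial satisfies
`Q̃_N(λ) = Q_N(λ) + A(λ) φ_N(λ) P_n(λ)` for an interior perturbation `0 < n < N-1`,
where `A(λ) = λ(θ⁻² - 1) - M` and `b_{N-1} := 1` in the definition of `φ_N`. -/
theorem stmt_12 (N n : ℕ) (hn1 : 1 ≤ n) (hn2 : n + 2 ≤ N)
    (a b a' b' : ℕ → ℝ) (hb : ∀ i, b i ≠ 0)
    (θ M : ℝ) (hθ : 0 < θ)
    (ha' : ∀ i, i ≠ n → a' i = a i) (han : a' n = θ ^ 2 * (a n + M))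
    (hb' : ∀ i, i ≠ n → i ≠ n - 1 → b' i = b i)
    (hbn : b' n = θ * b n) (hbn1 : b' (n - 1) = θ * b (n - 1))
    (P P' φ : ℕ → ℝ → ℝ)
    (hP0 : ∀ lam, P 0 lam = 1)
    (hP1 : ∀ lam, b 0 * P 1 lam = (lam - a 0) * P 0 lam)
    (hPrec : ∀ i lam, b (i + 1) * P (i + 2) lam =
      (lam - a (i + 1)) * P (i + 1) lam - b i * P i lam)
    (hP'0 : ∀ lam, P' 0 lam = 1)
    (hP'1 : ∀ lam, b' 0 * P' 1 lam = (lam - a' 0) * P' 0 lam)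
    (hP'rec : ∀ i lam, b' (i + 1) * P' (i + 2) lam =
      (lam - a' (i + 1)) * P' (i + 1) lam - b' i * P' i lam)
    (hφn : ∀ lam, φ n lam = 0)
    (hφn1 : ∀ lam, φ (n + 1) lam = 1 / b n)
    (hφrec : ∀ i lam, n + 2 ≤ i → i ≤ N - 1 →
      b (i - 1) * φ i lam = (lam - a (i - 1)) * φ (i - 1) lam - b (i - 2) * φ (i - 2) lam)
    (hφN : ∀ lam, φ N lam =
      (lam - a (N - 1)) * φ (N - 1) lam - b (N - 2) * φ (N - 2) lam)
    (Q Q' : ℝ → ℝ)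
    (hQ : ∀ lam, Q lam = (lam - a (N - 1)) * P (N - 1) lam - b (N - 2) * P (N - 2) lam)
    (hQ' : ∀ lam, Q' lam =
      (lam - a' (N - 1)) * P' (N - 1) lam - b' (N - 2) * P' (N - 2) lam) :
    ∀ lam, Q' lam = Q lam + (lam * ((θ ^ 2)⁻¹ - 1) - M) * φ N lam * P n lam := by
  intro lam
  obtain ⟨m, rfl⟩ : ∃ m, n = m + 1 := ⟨n - 1, by omega⟩
  obtain ⟨k, rfl⟩ : ∃ k, N = m + 1 + 2 + k := ⟨N - (m + 3), by omega⟩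
  have hθ0 : θ ≠ 0 := hθ.ne'
  have hθ2 : θ ^ 2 * (θ ^ 2)⁻¹ = 1 := mul_inv_cancel₀ (pow_ne_zero 2 hθ0)
  have hbn1' : b' m = θ * b m := by simpa using hbn1
  -- prefix: P' i = P i for i ≤ m
  have key1 : ∀ i, i ≤ m → P' i lam = P i lam := by
    intro i
    induction i using Nat.strong_induction_on with
    | _ i ih =>
      intro hi
      rcases i with _ | _ | j
      · rw [hP'0, hP0]
      · have h1 := hP'1 lam
        rw [ha' 0 (by omega), hb' 0 (by omega) (by omega), hP'0] at h1
        have h2 := hP1 lam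
        rw [hP0] at h2
        exact mul_left_cancel₀ (hb 0) (by rw [h1, h2])
      · have h1 := hP'rec j lam
        rw [ha' (j + 1) (by omega), hb' (j + 1) (by omega) (by omega),
            hb' j (by omega) (by omega), ih j (by omega) (by omega),
            ih (j + 1) (by omega) (by omega)] at h1
        exact mul_left_cancel₀ (hb (j + 1)) (by rw [h1, hPrec j lam])
  -- P'(m+1) = θ⁻¹ P(m+1), in multiplied form
  have key2 : θ * P' (m + 1) lam = P (m + 1) lam := by
    rcases m with _ | j
    · have h1 := hP'1 lam
      rw [ha' 0 (by omega), hbn1', hP'0] at h1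
      have h2 := hP1 lam
      rw [hP0] at h2
      apply mul_left_cancel₀ (hb 0)
      linear_combination h1 - h2
    · have h1 := hP'rec j lam
      rw [ha' (j + 1) (by omega), hb' j (by omega) (by omega), hbn1',
          key1 j (by omega), key1 (j + 1) (by omega)] at h1
      apply mul_left_cancel₀ (hb (j + 1))
      linear_combination h1 - hPrec j lam
  -- base step: P'(m+2)
  have key3 : P' (m + 2) lam = P (m + 2) lam
      + (lam * ((θ ^ 2)⁻¹ - 1) - M) * P (m + 1) lam * φ (m + 2) lam := by
    have h1 := hP'rec m lam
    rw [han, hbn, hbn1', key1 m le_rfl] at h1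
    have hφ : φ (m + 2) lam = 1 / b (m + 1) := hφn1 lam
    have hbi : b (m + 1) * (1 / b (m + 1)) = 1 := by rw [mul_one_div, div_self (hb (m + 1))]
    rw [hφ]
    apply mul_left_cancel₀ (mul_ne_zero hθ0 (hb (m + 1)))
    linear_combination h1 - θ * hPrec m lam
      + (lam * θ * (θ ^ 2)⁻¹ - θ * (a (m + 1) + M)) * key2
      - lam * P' (m + 1) lam * hθ2
      - θ * (lam * ((θ ^ 2)⁻¹ - 1) - M) * P (m + 1) lam * hbi
  -- main induction
  have key4 : ∀ i, m + 2 ≤ i → i ≤ m + 2 + k →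
      P' i lam = P i lam + (lam * ((θ ^ 2)⁻¹ - 1) - M) * P (m + 1) lam * φ i lam := by
    intro i
    induction i using Nat.strong_induction_on with
    | _ i ih =>
      intro hi1 hi2
      obtain ⟨j, rfl⟩ : ∃ j, i = m + 2 + j := ⟨i - (m + 2), by omega⟩
      rcases j with _ | _ | j
      · show P' (m + 2) lam = P (m + 2) lam
          + (lam * ((θ ^ 2)⁻¹ - 1) - M) * P (m + 1) lam * φ (m + 2) lam
        exact key3
      · show P' (m + 3) lam = P (m + 3) lam
          + (lam * ((θ ^ 2)⁻¹ - 1) - M) * P (m + 1) lam * φ (m + 3) lam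
        have h1 : b' (m + 2) * P' (m + 3) lam
            = (lam - a' (m + 2)) * P' (m + 2) lam - b' (m + 1) * P' (m + 1) lam :=
          hP'rec (m + 1) lam
        rw [ha' (m + 2) (by omega), hb' (m + 2) (by omega) (by omega), hbn, key3] at h1
        have hφ3 : b (m + 2) * φ (m + 3) lam =
            (lam - a (m + 2)) * φ (m + 2) lam - b (m + 1) * φ (m + 1) lam :=
          hφrec (m + 3) lam (by omega) (by omega)
        have hP : b (m + 2) * P (m + 3) lam
            = (lam - a (m + 2)) * P (m + 2) lam - b (m + 1) * P (m + 1) lam :=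
          hPrec (m + 1) lam
        have h0 := hφn lam
        apply mul_left_cancel₀ (hb (m + 2))
        linear_combination h1 - hP
          - (lam * ((θ ^ 2)⁻¹ - 1) - M) * P (m + 1) lam * hφ3
          - b (m + 1) * key2
          + (lam * ((θ ^ 2)⁻¹ - 1) - M) * P (m + 1) lam * b (m + 1) * h0
      · show P' (m + 2 + j + 2) lam = P (m + 2 + j + 2) lam
          + (lam * ((θ ^ 2)⁻¹ - 1) - M) * P (m + 1) lam * φ (m + 2 + j + 2) lam
        have h1 := hP'rec (m + 2 + j) lam
        rw [ha' (m + 2 + j + 1) (by omega),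
            hb' (m + 2 + j + 1) (by omega) (by omega),
            hb' (m + 2 + j) (by omega) (by omega),
            ih (m + 2 + j) (by omega) (by omega) (by omega),
            ih (m + 2 + j + 1) (by omega) (by omega) (by omega)] at h1
        have hφ3 : b (m + 2 + j + 1) * φ (m + 2 + j + 2) lam =
            (lam - a (m + 2 + j + 1)) * φ (m + 2 + j + 1) lam
              - b (m + 2 + j) * φ (m + 2 + j) lam :=
          hφrec (m + 2 + j + 2) lam (by omega) (by omega)
        apply mul_left_cancel₀ (hb (m + 2 + j + 1))
        linear_combination h1 - hPrec (m + 2 + j) lam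
          - (lam * ((θ ^ 2)⁻¹ - 1) - M) * P (m + 1) lam * hφ3
  -- conclusion
  have hQ'l := hQ' lam
  have hQl := hQ lam
  have hφNl := hφN lam
  rcases k with _ | k
  · have e1 : m + 1 + 2 + 0 - 1 = m + 2 := by omega
    have e2 : m + 1 + 2 + 0 - 2 = m + 1 := by omega
    rw [e1, e2] at hQ'l hQl hφNl
    rw [ha' (m + 2) (by omega), hbn, key3] at hQ'l
    have h0 := hφn lam
    rw [hQ'l, hQl, hφNl]
    linear_combination -(b (m + 1)) * key2
      + (lam * ((θ ^ 2)⁻¹ - 1) - M) * b (m + 1) * P (m + 1) lam * h0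
  · have e1 : m + 1 + 2 + (k + 1) - 1 = m + 2 + (k + 1) := by omega
    have e2 : m + 1 + 2 + (k + 1) - 2 = m + 2 + k := by omega
    rw [e1, e2] at hQ'l hQl hφNl
    rw [ha' (m + 2 + (k + 1)) (by omega),
        hb' (m + 2 + k) (by omega) (by omega),
        key4 (m + 2 + (k + 1)) (by omega) (by omega),
        key4 (m + 2 + k) (by omega) (by omega)] at hQ'l
    rw [hQ'l, hQl, hφNl]
    ring
end

section
/- Let λ_1 < λ_2 < ⋯ < λ_N and λ̃_1 < λ̃_2 < ⋯ < λ̃_N be real numbers with λ_j ≤ λ̃_j ≤ λ_{j+1} for all j (interlacing, with λ_{N+1} = +∞), and let K ∈ ℝ with K ∉ {λ_1,...,λ_N}. Define β_j = ∏_{i=1}^N (λ_j - λ̃_i) / [ (λ_j - K) ∏_{i ≠ j} (λ_j - λ_i) ]. If additionally λ_p < K ≤ λ_{p+1} and there is exactly one λ̃ in each of the intervals [λ_j, λ_{j+1}) for j < p, (λ_j, λ_{j+1}] for j > p, [λ_p, K), and (K, λ_{p+1}], then β_j ≥ 0 for every j. -/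
open BigOperators

/-- Positivity of the residues `β_j` of `N(λ)/(λ-K)` under the interlacing conditions of
Theorem 3 of the paper (here stated with 0-based indices `j = 0,…,N-1` corresponding to the
paper's `j = 1,…,N`; `λ_{N+1} = +∞` and `λ_0 = -∞` in the paper become vacuous guards). -/
theorem stmt_16 (N : ℕ) (lam lamt : Fin N → ℝ)
    (hlam : StrictMono lam) (hlamt : StrictMono lamt)
    (hinter : ∀ j : Fin N, lam j ≤ lamt j ∧
      ∀ h : (j : ℕ) + 1 < N, lamt j ≤ lam ⟨(j : ℕ) + 1, h⟩)
    (K : ℝ) (hK : ∀ j, K ≠ lam j)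
    (p : ℕ) (hp : p ≤ N)
    (hpK1 : ∀ j : Fin N, (j : ℕ) + 1 = p → lam j < K)
    (hpK2 : ∀ j : Fin N, (j : ℕ) = p → K ≤ lam j)
    (h1 : ∀ j : Fin N, ∀ h : (j : ℕ) + 1 < p,
      lam j ≤ lamt j ∧ lamt j < lam ⟨(j : ℕ) + 1, lt_of_lt_of_le h hp⟩)
    (h2 : ∀ j : Fin N, (j : ℕ) + 1 = p → lam j ≤ lamt j ∧ lamt j < K)
    (h3 : ∀ j : Fin N, (j : ℕ) = p → K < lamt j ∧ lamt j ≤ lam j)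
    (h4 : ∀ j : Fin N, p + 1 ≤ (j : ℕ) →
      lam ⟨(j : ℕ) - 1, lt_of_le_of_lt (Nat.sub_le _ _) j.isLt⟩ < lamt j ∧ lamt j ≤ lam j)
    (j : Fin N) :
    0 ≤ (∏ i, (lam j - lamt i)) /
        ((lam j - K) * ∏ i ∈ Finset.univ.erase j, (lam j - lam i)) := by
  have hA : ∀ i : Fin N, i < j → lamt i ≤ lam j := by
    intro i hij
    have hij' : (i : ℕ) < (j : ℕ) := hij
    have h1' : (i : ℕ) + 1 < N := Nat.lt_of_le_of_lt (Nat.succ_le_of_lt hij') j.isLt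
    refine ((hinter i).2 h1').trans (hlam.monotone ?_)
    simp only [Fin.le_def]
    omega
  have hB : ∀ i : Fin N, j < i → lam j < lamt i := fun i hij =>
    lt_of_lt_of_le (hlam hij) (hinter i).1
  have hF : 0 ≤ (lam j - lamt j) * (lam j - K) := by
    by_cases hjp : (j : ℕ) < p
    · have h₁ : lam j ≤ lamt j := (hinter j).1
      have h₂ : lam j < K := by
        rcases eq_or_lt_of_le (Nat.succ_le_of_lt hjp) with he | hl
        · exact hpK1 j he
        · have hpN : p - 1 < N := by omega
          have hK' := hpK1 ⟨p - 1, hpN⟩ (by simp; omega)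
          refine lt_of_le_of_lt (hlam.monotone ?_) hK'
          simp only [Fin.le_def]
          omega
      exact mul_nonneg_iff.mpr (Or.inr ⟨by linarith, by linarith⟩)
    · have h₁ : lamt j ≤ lam j := by
        rcases eq_or_lt_of_le (Nat.le_of_not_lt hjp) with he | hl
        · exact (h3 j he.symm).2
        · exact (h4 j hl).2
      have h₂ : lam j - lamt j = 0 := by linarith [(hinter j).1]
      rw [h₂, zero_mul]
  have key : 0 ≤ (∏ i, (lam j - lamt i)) *
      ((lam j - K) * ∏ i ∈ Finset.univ.erase j, (lam j - lam i)) := by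
    rw [← Finset.mul_prod_erase Finset.univ (fun i => lam j - lamt i) (Finset.mem_univ j)]
    have hre : (lam j - lamt j) * (∏ i ∈ Finset.univ.erase j, (lam j - lamt i)) *
        ((lam j - K) * ∏ i ∈ Finset.univ.erase j, (lam j - lam i)) =
        ((lam j - lamt j) * (lam j - K)) *
          ∏ i ∈ Finset.univ.erase j, ((lam j - lamt i) * (lam j - lam i)) := by
      rw [Finset.prod_mul_distrib]; ring
    rw [hre]
    refine mul_nonneg hF (Finset.prod_nonneg fun i hi => ?_)
    have hij : i ≠ j := Finset.ne_of_mem_erase hi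
    rcases lt_or_gt_of_ne hij with h | h
    · exact mul_nonneg (by linarith [hA i h]) (by linarith [hlam h])
    · exact mul_nonneg_iff.mpr (Or.inr ⟨by linarith [hB i h], by linarith [hlam h]⟩)
  rw [div_nonneg_iff]
  exact mul_nonneg_iff.mp key
end

section
/- Let J be an N×N Jacobi matrix with nonzero off-diagonals, fix 1 ≤ n ≤ N-2, and let G(λ) = ⟨δ_n, (J - λ)^{-1} δ_n⟩, m_+(λ) = ⟨δ_{n+1}, (J_{[n+1,N-1]} - λ)^{-1} δ_{n+1}⟩, m_-(λ) = ⟨δ_{n-1}, (J_{[0,n-1]} - λ)^{-1} δ_{n-1}⟩. Then for all λ not an eigenvalue of J, J_{[0,n-1]}, or J_{[n+1,N-1]}: -G(λ)^{-1} = λ - a_n + b_n² m_+(λ) + b_{n-1}² m_-(λ), provided G(λ) ≠ 0. -/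
open Matrix BigOperators

def jacobi (N : ℕ) (a b : ℕ → ℝ) : Matrix (Fin N) (Fin N) ℝ :=
  Matrix.of fun i j =>
    if (i : ℕ) = (j : ℕ) then a i
    else if (i : ℕ) + 1 = (j : ℕ) then b i
    else if (j : ℕ) + 1 = (i : ℕ) then b j
    else 0

def isEig {m : ℕ} (M : Matrix (Fin m) (Fin m) ℝ) (μ : ℝ) : Prop :=
  ∃ v : Fin m → ℝ, v ≠ 0 ∧ M.mulVec v = μ • v

lemma isUnit_det_of_not_eig {m : ℕ} (M : Matrix (Fin m) (Fin m) ℝ) (lam : ℝ)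
    (h : ¬ isEig M lam) : IsUnit (M - lam • (1 : Matrix (Fin m) (Fin m) ℝ)).det := by
  rw [isUnit_iff_ne_zero]
  intro hdet
  obtain ⟨v, hv, hv0⟩ := (Matrix.exists_mulVec_eq_zero_iff).mpr hdet
  refine h ⟨v, hv, ?_⟩
  rw [Matrix.sub_mulVec, Matrix.smul_mulVec, Matrix.one_mulVec, sub_eq_zero] at hv0
  exact hv0

lemma sum_ite_val {N : ℕ} (c : ℕ) (F : Fin N → ℝ) :
    ∑ j : Fin N, (if c = (j : ℕ) then F j else 0)
      = if h : c < N then F ⟨c, h⟩ else 0 := by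
  split_ifs with h
  · rw [Finset.sum_eq_single ⟨c, h⟩]
    · simp
    · intro j _ hj
      rw [if_neg]
      intro hc
      exact hj (Fin.ext hc.symm)
    · simp
  · apply Finset.sum_eq_zero
    intro j _
    rw [if_neg]
    exact fun hc => h (hc ▸ j.isLt)

lemma jacobi_row {N : ℕ} (a b : ℕ → ℝ) (u : Fin N → ℝ) (i : Fin N) :
    ∑ j : Fin N, jacobi N a b i j * u j
      = (if h : (i : ℕ) + 1 < N then b i * u ⟨(i : ℕ) + 1, h⟩ else 0)
        + a i * u i
        + (if h : 0 < (i : ℕ) then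
            b ((i : ℕ) - 1) * u ⟨(i : ℕ) - 1, lt_of_le_of_lt (Nat.sub_le _ _) i.isLt⟩ else 0) := by
  have split : ∀ j : Fin N, jacobi N a b i j * u j
      = (if (i : ℕ) + 1 = (j : ℕ) then b i * u j else 0)
        + (if (i : ℕ) = (j : ℕ) then a i * u j else 0)
        + (if (j : ℕ) + 1 = (i : ℕ) then b (j : ℕ) * u j else 0) := by
    intro j
    simp only [jacobi, Matrix.of_apply]
    by_cases h1 : (i : ℕ) = (j : ℕ)
    · rw [if_pos h1, if_neg (by omega), if_pos h1, if_neg (by omega)]; ring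
    · rw [if_neg h1, if_neg h1]
      by_cases h2 : (i : ℕ) + 1 = (j : ℕ)
      · rw [if_pos h2, if_pos h2, if_neg (by omega)]; ring
      · rw [if_neg h2, if_neg h2]
        by_cases h3 : (j : ℕ) + 1 = (i : ℕ)
        · rw [if_pos h3, if_pos h3]; ring
        · rw [if_neg h3, if_neg h3]; ring
  rw [Finset.sum_congr rfl fun j _ => split j]
  rw [Finset.sum_add_distrib, Finset.sum_add_distrib]
  have e1 : ∑ j : Fin N, (if (i : ℕ) + 1 = (j : ℕ) then b i * u j else 0)
      = (if h : (i : ℕ) + 1 < N then b i * u ⟨(i : ℕ) + 1, h⟩ else 0) :=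
    sum_ite_val ((i : ℕ) + 1) (fun j => b i * u j)
  have e2 : ∑ j : Fin N, (if (i : ℕ) = (j : ℕ) then a i * u j else 0) = a i * u i := by
    rw [sum_ite_val (i : ℕ) (fun j => a i * u j), dif_pos i.isLt]
  rw [e1, e2]
  congr 1
  by_cases h : 0 < (i : ℕ)
  · rw [dif_pos h]
    have key : ∀ j : Fin N, (if (j : ℕ) + 1 = (i : ℕ) then b (j : ℕ) * u j else 0)
        = (if (i : ℕ) - 1 = (j : ℕ) then b ((i : ℕ) - 1) * u j else 0) := by
      intro j
      by_cases hj : (j : ℕ) + 1 = (i : ℕ)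
      · rw [if_pos hj, if_pos (by omega)]
        have hv : (i : ℕ) - 1 = (j : ℕ) := by omega
        rw [hv]
      · rw [if_neg hj, if_neg (by omega)]
    rw [Finset.sum_congr rfl fun j _ => key j,
      sum_ite_val ((i : ℕ) - 1) (fun j => b ((i : ℕ) - 1) * u j),
      dif_pos (lt_of_le_of_lt (Nat.sub_le _ _) i.isLt)]
  · rw [dif_neg h]
    apply Finset.sum_eq_zero
    intro j _
    rw [if_neg (by omega)]

/-- jacobi_row with the vector given as a function on `ℕ`. -/
lemma jacobi_row' {N : ℕ} (a b : ℕ → ℝ) (u : ℕ → ℝ) (i : Fin N) :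
    ∑ j : Fin N, jacobi N a b i j * u (j : ℕ)
      = (if (i : ℕ) + 1 < N then b i * u ((i : ℕ) + 1) else 0)
        + a i * u (i : ℕ)
        + (if 0 < (i : ℕ) then b ((i : ℕ) - 1) * u ((i : ℕ) - 1) else 0) := by
  have h := jacobi_row a b (fun j => u (j : ℕ)) i
  simp only at h
  rw [h]
  simp only [dite_eq_ite]

/-- Expansion of an entry of `(J - λ)` times a scalar. -/
lemma entry_expand {m : ℕ} (a b : ℕ → ℝ) (lam : ℝ) (i j : Fin m) (x : ℝ) :
    (jacobi m a b - lam • (1 : Matrix (Fin m) (Fin m) ℝ)) i j * x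
      = jacobi m a b i j * x - (if i = j then lam * x else 0) := by
  rw [Matrix.sub_apply, Matrix.smul_apply, Matrix.one_apply, smul_eq_mul]
  by_cases hij : i = j
  · rw [if_pos hij, if_pos hij]; ring
  · rw [if_neg hij, if_neg hij]; ring

/-- Row equations satisfied by a column of the resolvent. -/
lemma inv_col_rows {N : ℕ} (a b : ℕ → ℝ) (lam : ℝ)
    (h : IsUnit (jacobi N a b - lam • (1 : Matrix (Fin N) (Fin N) ℝ)).det)
    (t : Fin N) (V : ℕ → ℝ)
    (hV : ∀ k (hk : k < N),
      V k = ((jacobi N a b - lam • (1 : Matrix (Fin N) (Fin N) ℝ))⁻¹) ⟨k, hk⟩ t)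
    (i : Fin N) :
    (if (i : ℕ) + 1 < N then b i * V ((i : ℕ) + 1) else 0) + a i * V (i : ℕ)
      + (if 0 < (i : ℕ) then b ((i : ℕ) - 1) * V ((i : ℕ) - 1) else 0) - lam * V (i : ℕ)
      = if (i : ℕ) = (t : ℕ) then 1 else 0 := by
  have hmul := Matrix.mul_nonsing_inv _ h
  have hcomp := congrFun (congrFun hmul i) t
  rw [Matrix.mul_apply, Matrix.one_apply] at hcomp
  have eV : ∀ j : Fin N,
      ((jacobi N a b - lam • (1 : Matrix (Fin N) (Fin N) ℝ))⁻¹) j t = V (j : ℕ) := by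
    intro j
    rw [hV (j : ℕ) j.isLt]
  rw [Finset.sum_congr rfl fun j _ => by rw [eV j],
    Finset.sum_congr rfl fun j _ => entry_expand a b lam i j (V (j : ℕ)),
    Finset.sum_sub_distrib,
    Finset.sum_ite_eq Finset.univ i (fun j : Fin N => lam * V (j : ℕ)),
    if_pos (Finset.mem_univ i),
    jacobi_row' a b V i] at hcomp
  by_cases he : i = t
  · rw [if_pos he] at hcomp
    rw [if_pos (show (i : ℕ) = (t : ℕ) by rw [he])]
    exact hcomp
  · rw [if_neg he] at hcomp
    rw [if_neg (fun hc => he (Fin.ext hc))]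
    exact hcomp

lemma sum_mul_ite {m : ℕ} (M : Matrix (Fin m) (Fin m) ℝ) (c : ℝ) (t k : Fin m) :
    ∑ j : Fin m, M k j * (if (j : ℕ) = (t : ℕ) then c else 0) = M k t * c := by
  simp [mul_ite, mul_zero, Fin.val_eq_val, Finset.sum_ite_eq']

/-- The resolvent splitting identity
`-G(λ)⁻¹ = λ - a_n + b_n² m_+(λ) + b_{n-1}² m_-(λ)` for an interior index `1 ≤ n ≤ N-2`,
where `G(λ) = ⟨δ_n, (J-λ)⁻¹δ_n⟩`, `m_+(λ) = ⟨δ_{n+1}, (J_{[n+1,N-1]}-λ)⁻¹δ_{n+1}⟩` and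
`m_-(λ) = ⟨δ_{n-1}, (J_{[0,n-1]}-λ)⁻¹δ_{n-1}⟩`. -/
theorem stmt_18 (N n : ℕ) (hn1 : 1 ≤ n) (hn2 : n + 2 ≤ N)
    (a b : ℕ → ℝ) (hb : ∀ i, b i ≠ 0) (lam : ℝ)
    (h1 : ¬ isEig (jacobi N a b) lam)
    (h2 : ¬ isEig (jacobi n a b) lam)
    (h3 : ¬ isEig (jacobi (N - n - 1) (fun i => a (n + 1 + i)) (fun i => b (n + 1 + i))) lam)
    (hG : ((jacobi N a b - lam • (1 : Matrix (Fin N) (Fin N) ℝ))⁻¹)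
      ⟨n, by omega⟩ ⟨n, by omega⟩ ≠ 0) :
    -(((jacobi N a b - lam • (1 : Matrix (Fin N) (Fin N) ℝ))⁻¹)
        ⟨n, by omega⟩ ⟨n, by omega⟩)⁻¹ =
      lam - a n +
        (b n) ^ 2 * ((jacobi (N - n - 1) (fun i => a (n + 1 + i)) (fun i => b (n + 1 + i)) -
          lam • (1 : Matrix (Fin (N - n - 1)) (Fin (N - n - 1)) ℝ))⁻¹)
            ⟨0, by omega⟩ ⟨0, by omega⟩ +
        (b (n - 1)) ^ 2 * ((jacobi n a b -
          lam • (1 : Matrix (Fin n) (Fin n) ℝ))⁻¹) ⟨n - 1, by omega⟩ ⟨n - 1, by omega⟩ := by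
  have hnN : n < N := by omega
  have hA := isUnit_det_of_not_eig _ lam h1
  have hAm := isUnit_det_of_not_eig _ lam h2
  have hAp := isUnit_det_of_not_eig _ lam h3
  set U : ℕ → ℝ := fun k =>
    if h : k < N then ((jacobi N a b - lam • (1 : Matrix (Fin N) (Fin N) ℝ))⁻¹) ⟨k, h⟩ ⟨n, hnN⟩
    else 0 with hUdef
  have hU : ∀ k (hk : k < N),
      U k = ((jacobi N a b - lam • (1 : Matrix (Fin N) (Fin N) ℝ))⁻¹) ⟨k, hk⟩ ⟨n, hnN⟩ := by
    intro k hk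
    rw [hUdef]
    exact dif_pos hk
  have hrow := inv_col_rows a b lam hA ⟨n, hnN⟩ U hU
  have hrow' : ∀ (k : ℕ), k < N →
      (if k + 1 < N then b k * U (k + 1) else 0) + a k * U k
        + (if 0 < k then b (k - 1) * U (k - 1) else 0) - lam * U k
        = if k = n then 1 else 0 := fun k hk => hrow ⟨k, hk⟩
  -- minus block
  have hm : ∀ i : Fin n,
      Matrix.mulVec (jacobi n a b - lam • (1 : Matrix (Fin n) (Fin n) ℝ))
          (fun j => U (j : ℕ)) i
        = if (i : ℕ) = n - 1 then -(b (n - 1) * U n) else 0 := by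
    intro i
    have hi : (i : ℕ) < n := i.isLt
    have hri := hrow' (i : ℕ) (by omega)
    rw [if_neg (show ¬ (i : ℕ) = n by omega),
      if_pos (show (i : ℕ) + 1 < N by omega)] at hri
    have hmv : Matrix.mulVec (jacobi n a b - lam • (1 : Matrix (Fin n) (Fin n) ℝ))
        (fun j => U (j : ℕ)) i
        = ∑ j : Fin n, (jacobi n a b - lam • (1 : Matrix (Fin n) (Fin n) ℝ)) i j * U (j : ℕ) := by
      simp [Matrix.mulVec, dotProduct]
    rw [hmv, Finset.sum_congr rfl fun j _ => entry_expand a b lam i j (U (j : ℕ)),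
      Finset.sum_sub_distrib,
      Finset.sum_ite_eq Finset.univ i (fun j : Fin n => lam * U (j : ℕ)),
      if_pos (Finset.mem_univ i), jacobi_row' a b U i]
    by_cases hlast : (i : ℕ) + 1 < n
    · rw [if_neg (show ¬ (i : ℕ) = n - 1 by omega), if_pos hlast]
      linear_combination hri
    · have hieq : (i : ℕ) = n - 1 := by omega
      have h2' : (i : ℕ) + 1 = n := by omega
      rw [if_pos hieq, if_neg hlast]
      rw [h2'] at hri
      rw [← hieq]
      linear_combination hri
  have hvm : ∀ k : Fin n, U (k : ℕ)
      = ∑ j : Fin n, ((jacobi n a b - lam • (1 : Matrix (Fin n) (Fin n) ℝ))⁻¹) k j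
          * (if (j : ℕ) = n - 1 then -(b (n - 1) * U n) else 0) := by
    intro k
    have h1' : Matrix.mulVec (jacobi n a b - lam • (1 : Matrix (Fin n) (Fin n) ℝ))
        (fun j => U (j : ℕ))
        = fun i : Fin n => if (i : ℕ) = n - 1 then -(b (n - 1) * U n) else 0 := funext hm
    have h2' : (fun j : Fin n => U (j : ℕ))
        = Matrix.mulVec ((jacobi n a b - lam • (1 : Matrix (Fin n) (Fin n) ℝ))⁻¹)
            (fun i : Fin n => if (i : ℕ) = n - 1 then -(b (n - 1) * U n) else 0) := by
      rw [← h1', Matrix.mulVec_mulVec, Matrix.nonsing_inv_mul _ hAm, Matrix.one_mulVec]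
    have h3' := congrFun h2' k
    simp only [Matrix.mulVec, dotProduct] at h3'
    exact h3'
  have hn1n : n - 1 < n := by omega
  have humm : U (n - 1)
      = ((jacobi n a b - lam • (1 : Matrix (Fin n) (Fin n) ℝ))⁻¹) ⟨n - 1, hn1n⟩ ⟨n - 1, hn1n⟩
          * (-(b (n - 1) * U n)) := by
    have h4 := hvm ⟨n - 1, hn1n⟩
    rw [sum_mul_ite ((jacobi n a b - lam • (1 : Matrix (Fin n) (Fin n) ℝ))⁻¹)
      (-(b (n - 1) * U n)) ⟨n - 1, hn1n⟩ ⟨n - 1, hn1n⟩] at h4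
    exact h4
  -- plus block
  have hp0 : 0 < N - n - 1 := by omega
  have hp : ∀ i : Fin (N - n - 1),
      Matrix.mulVec (jacobi (N - n - 1) (fun i => a (n + 1 + i)) (fun i => b (n + 1 + i))
          - lam • (1 : Matrix (Fin (N - n - 1)) (Fin (N - n - 1)) ℝ))
          (fun j => U (n + 1 + (j : ℕ))) i
        = if (i : ℕ) = 0 then -(b n * U n) else 0 := by
    intro i
    have hi : (i : ℕ) < N - n - 1 := i.isLt
    have hri := hrow' (n + 1 + (i : ℕ)) (by omega)
    rw [if_neg (show ¬ n + 1 + (i : ℕ) = n by omega),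
      if_pos (show 0 < n + 1 + (i : ℕ) by omega)] at hri
    have e3 : n + 1 + (i : ℕ) - 1 = n + (i : ℕ) := by omega
    rw [e3] at hri
    have hmv : Matrix.mulVec (jacobi (N - n - 1) (fun i => a (n + 1 + i)) (fun i => b (n + 1 + i))
        - lam • (1 : Matrix (Fin (N - n - 1)) (Fin (N - n - 1)) ℝ))
        (fun j => U (n + 1 + (j : ℕ))) i
        = ∑ j : Fin (N - n - 1),
            (jacobi (N - n - 1) (fun i => a (n + 1 + i)) (fun i => b (n + 1 + i))
              - lam • (1 : Matrix (Fin (N - n - 1)) (Fin (N - n - 1)) ℝ)) i j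
            * U (n + 1 + (j : ℕ)) := by
      simp [Matrix.mulVec, dotProduct]
    rw [hmv, Finset.sum_congr rfl fun j _ =>
        entry_expand (fun i => a (n + 1 + i)) (fun i => b (n + 1 + i)) lam i j (U (n + 1 + (j : ℕ))),
      Finset.sum_sub_distrib,
      Finset.sum_ite_eq Finset.univ i (fun j : Fin (N - n - 1) => lam * U (n + 1 + (j : ℕ))),
      if_pos (Finset.mem_univ i),
      jacobi_row' (fun i => a (n + 1 + i)) (fun i => b (n + 1 + i)) (fun k => U (n + 1 + k)) i]
    rw [show n + 1 + ((i : ℕ) + 1) = n + 1 + (i : ℕ) + 1 from by omega]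
    by_cases hlast : (i : ℕ) + 1 < N - n - 1
    · rw [if_pos hlast]
      rw [if_pos (show n + 1 + (i : ℕ) + 1 < N by omega)] at hri
      by_cases h0 : 0 < (i : ℕ)
      · rw [if_pos h0, if_neg (show ¬ (i : ℕ) = 0 by omega)]
        have e4 : n + 1 + ((i : ℕ) - 1) = n + (i : ℕ) := by omega
        rw [e4]
        linear_combination hri
      · have hi0 : (i : ℕ) = 0 := by omega
        rw [if_neg h0, if_pos hi0]
        rw [hi0] at hri ⊢
        simp only [Nat.add_zero, Nat.zero_add] at hri ⊢
        linear_combination hri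
    · rw [if_neg hlast]
      rw [if_neg (show ¬ n + 1 + (i : ℕ) + 1 < N by omega)] at hri
      by_cases h0 : 0 < (i : ℕ)
      · rw [if_pos h0, if_neg (show ¬ (i : ℕ) = 0 by omega)]
        have e4 : n + 1 + ((i : ℕ) - 1) = n + (i : ℕ) := by omega
        rw [e4]
        linear_combination hri
      · have hi0 : (i : ℕ) = 0 := by omega
        rw [if_neg h0, if_pos hi0]
        rw [hi0] at hri ⊢
        simp only [Nat.add_zero, Nat.zero_add] at hri ⊢
        linear_combination hri
  have hvp : ∀ k : Fin (N - n - 1), U (n + 1 + (k : ℕ))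
      = ∑ j : Fin (N - n - 1),
          ((jacobi (N - n - 1) (fun i => a (n + 1 + i)) (fun i => b (n + 1 + i))
            - lam • (1 : Matrix (Fin (N - n - 1)) (Fin (N - n - 1)) ℝ))⁻¹) k j
          * (if (j : ℕ) = 0 then -(b n * U n) else 0) := by
    intro k
    have h1' : Matrix.mulVec (jacobi (N - n - 1) (fun i => a (n + 1 + i)) (fun i => b (n + 1 + i))
        - lam • (1 : Matrix (Fin (N - n - 1)) (Fin (N - n - 1)) ℝ))
        (fun j => U (n + 1 + (j : ℕ)))
        = fun i : Fin (N - n - 1) => if (i : ℕ) = 0 then -(b n * U n) else 0 := funext hp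
    have h2' : (fun j : Fin (N - n - 1) => U (n + 1 + (j : ℕ)))
        = Matrix.mulVec ((jacobi (N - n - 1) (fun i => a (n + 1 + i)) (fun i => b (n + 1 + i))
            - lam • (1 : Matrix (Fin (N - n - 1)) (Fin (N - n - 1)) ℝ))⁻¹)
            (fun i : Fin (N - n - 1) => if (i : ℕ) = 0 then -(b n * U n) else 0) := by
      rw [← h1', Matrix.mulVec_mulVec, Matrix.nonsing_inv_mul _ hAp, Matrix.one_mulVec]
    have h3' := congrFun h2' k
    simp only [Matrix.mulVec, dotProduct] at h3'
    exact h3'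
  have hupp : U (n + 1)
      = ((jacobi (N - n - 1) (fun i => a (n + 1 + i)) (fun i => b (n + 1 + i))
          - lam • (1 : Matrix (Fin (N - n - 1)) (Fin (N - n - 1)) ℝ))⁻¹) ⟨0, hp0⟩ ⟨0, hp0⟩
          * (-(b n * U n)) := by
    have h4 := hvp ⟨0, hp0⟩
    rw [sum_mul_ite ((jacobi (N - n - 1) (fun i => a (n + 1 + i)) (fun i => b (n + 1 + i))
      - lam • (1 : Matrix (Fin (N - n - 1)) (Fin (N - n - 1)) ℝ))⁻¹)
      (-(b n * U n)) ⟨0, hp0⟩ ⟨0, hp0⟩] at h4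
    exact h4
  -- row n
  have hrn := hrow' n hnN
  rw [if_pos rfl, if_pos (show n + 1 < N by omega), if_pos (show 0 < n by omega)] at hrn
  have hGU : U n ≠ 0 := by
    rw [hU n hnN]
    exact hG
  have main : (lam - a n
      + b n ^ 2 * ((jacobi (N - n - 1) (fun i => a (n + 1 + i)) (fun i => b (n + 1 + i))
          - lam • (1 : Matrix (Fin (N - n - 1)) (Fin (N - n - 1)) ℝ))⁻¹) ⟨0, hp0⟩ ⟨0, hp0⟩
      + b (n - 1) ^ 2 * ((jacobi n a b
          - lam • (1 : Matrix (Fin n) (Fin n) ℝ))⁻¹) ⟨n - 1, hn1n⟩ ⟨n - 1, hn1n⟩) * U n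
      = -1 := by
    linear_combination (-1 : ℝ) * hrn + b n * hupp + b (n - 1) * humm
  have goal' : -(U n)⁻¹ = lam - a n
      + b n ^ 2 * ((jacobi (N - n - 1) (fun i => a (n + 1 + i)) (fun i => b (n + 1 + i))
          - lam • (1 : Matrix (Fin (N - n - 1)) (Fin (N - n - 1)) ℝ))⁻¹) ⟨0, hp0⟩ ⟨0, hp0⟩
      + b (n - 1) ^ 2 * ((jacobi n a b
          - lam • (1 : Matrix (Fin n) (Fin n) ℝ))⁻¹) ⟨n - 1, hn1n⟩ ⟨n - 1, hn1n⟩ := by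
    rw [eq_div_of_mul_eq hGU main, neg_div, one_div]
  rw [hU n hnN] at goal'
  exact goal'
end
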